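/- arXiv:1506.00533 — 2 statements merged into one kernel-verified Lean document; each statement's English description precedes it below -/
import Mathlib

section
/- (Uniqueness part of topological equivalence conjugacy) Suppose G̃ satisfies |G̃(t,s)| ≤ Kρ* e^{-α|t-s|}, f satisfies the Lipschitz bound with constants ℓ₁, ℓ₂, and 2(ℓ₁+ℓ₂)Kρ*/α < 1. If J : ℝ → ℝⁿ and x : ℝ → ℝⁿ are continuous with J − x bounded, and J(t) − x(t) = ∫_ℝ G̃(t,s)[ f(s, J(s), J(γ(s))) − f(s, x(s), x(γ(s))) ] ds for all t, then J(t) = x(t) for all t. -/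
open MeasureTheory

lemma exp_abs_integrable (α : ℝ) (hα : 0 < α) :
    Integrable (fun u : ℝ => Real.exp (-α * |u|)) volume := by
  have h1 : IntegrableOn (fun u : ℝ => Real.exp (-α * |u|)) (Set.Ioi 0) := by
    refine (exp_neg_integrableOn_Ioi 0 hα).congr_fun ?_ measurableSet_Ioi
    intro u hu
    simp [abs_of_pos (show (0:ℝ) < u from hu)]
  have h2 : IntegrableOn (fun u : ℝ => Real.exp (-α * |u|)) (Set.Iic 0) := by
    rw [← Measure.map_neg_eq_self (volume : Measure ℝ)]
    have m : MeasurableEmbedding (fun x : ℝ => -x) :=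
      (Homeomorph.neg ℝ).measurableEmbedding
    rw [m.integrableOn_map_iff]
    simp_rw [Function.comp_def, abs_neg, Set.neg_preimage, Set.neg_Iic, neg_zero]
    exact Iff.mpr integrableOn_Ici_iff_integrableOn_Ioi h1
  have := h2.union h1
  rwa [Set.Iic_union_Ioi, integrableOn_univ] at this

lemma exp_abs_shift_integrable (α t : ℝ) (hα : 0 < α) :
    Integrable (fun s : ℝ => Real.exp (-α * |t - s|)) volume := by
  have h := (exp_abs_integrable α hα).comp_add_right (-t)
  refine h.congr (Filter.Eventually.of_forall fun s => ?_)
  simp [← sub_eq_add_neg, abs_sub_comm s t]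

lemma exp_abs_integral (α t : ℝ) (hα : 0 < α) :
    ∫ s : ℝ, Real.exp (-α * |t - s|) = 2 / α := by
  have h1 : (∫ s : ℝ, Real.exp (-α * |t - s|))
      = ∫ s : ℝ, Real.exp (-α * |s + -t|) := by
    congr 1; funext s; rw [← sub_eq_add_neg, abs_sub_comm s t]
  rw [h1, integral_add_right_eq_self (fun u : ℝ => Real.exp (-α * |u|)) (-t)]
  have h2 : (∫ u : ℝ, Real.exp (-α * |u|)) = ∫ u : ℝ, (fun y => Real.exp (-α * y)) |u| := rfl
  rw [h2, integral_comp_abs (f := fun y => Real.exp (-α * y))]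
  have h3 : (∫ u : ℝ in Set.Ioi (0:ℝ), Real.exp (-α * u))
      = ∫ u : ℝ in Set.Ioi (0:ℝ), (fun y => Real.exp (-y)) (α * u) := by
    congr 1; funext u; simp [neg_mul]
  rw [h3, integral_comp_mul_left_Ioi (fun y => Real.exp (-y)) 0 hα]
  simp only [mul_zero, integral_exp_neg_Ioi, neg_zero, Real.exp_zero, smul_eq_mul, mul_one]
  rw [eq_div_iff (ne_of_gt hα)]
  field_simp

theorem stmt10 {n : ℕ}
    (G : ℝ → ℝ → ((Fin n → ℝ) →L[ℝ] (Fin n → ℝ)))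
    (f : ℝ → (Fin n → ℝ) → (Fin n → ℝ) → (Fin n → ℝ))
    (γ : ℝ → ℝ) (J x : ℝ → (Fin n → ℝ))
    (K ρ α ℓ₁ ℓ₂ : ℝ) (hK : 1 ≤ K) (hρ : 1 ≤ ρ) (hα : 0 < α)
    (hℓ₁ : 0 < ℓ₁) (hℓ₂ : 0 < ℓ₂)
    (hG : ∀ t s : ℝ, ‖G t s‖ ≤ K * ρ * Real.exp (-α * |t - s|))
    (hfl : ∀ (s : ℝ) (a a' b b' : Fin n → ℝ),
      ‖f s a b - f s a' b'‖ ≤ ℓ₁ * ‖a - a'‖ + ℓ₂ * ‖b - b'‖)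
    (hcond : 2 * (ℓ₁ + ℓ₂) * K * ρ / α < 1)
    (hJ : Continuous J) (hx : Continuous x)
    (hbdd : ∃ C : ℝ, ∀ t : ℝ, ‖J t - x t‖ ≤ C)
    (hint : ∀ t : ℝ, Integrable (fun s =>
      (G t s) (f s (J s) (J (γ s)) - f s (x s) (x (γ s)))) volume)
    (heq : ∀ t : ℝ, J t - x t = ∫ s : ℝ,
      (G t s) (f s (J s) (J (γ s)) - f s (x s) (x (γ s)))) :
    ∀ t : ℝ, J t = x t := by
  obtain ⟨C, hC⟩ := hbdd
  have hbdd' : BddAbove (Set.range fun t : ℝ => ‖J t - x t‖) :=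
    ⟨C, by rintro _ ⟨t, rfl⟩; exact hC t⟩
  set M : ℝ := ⨆ t : ℝ, ‖J t - x t‖ with hM
  have hMle : ∀ t : ℝ, ‖J t - x t‖ ≤ M := fun t => le_ciSup hbdd' t
  have hM0 : 0 ≤ M := le_trans (norm_nonneg _) (hMle 0)
  set q : ℝ := 2 * (ℓ₁ + ℓ₂) * K * ρ / α with hq
  have hKρ : 0 ≤ K * ρ := mul_nonneg (le_trans zero_le_one hK) (le_trans zero_le_one hρ)
  have hq0 : 0 ≤ q := by
    apply div_nonneg _ hα.le
    positivity
  -- key estimate: M ≤ q * M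
  have key : M ≤ q * M := by
    apply ciSup_le
    intro t
    rw [heq t]
    have hbound : ∀ s : ℝ,
        ‖(G t s) (f s (J s) (J (γ s)) - f s (x s) (x (γ s)))‖
          ≤ (K * ρ * ((ℓ₁ + ℓ₂) * M)) * Real.exp (-α * |t - s|) := by
      intro s
      calc ‖(G t s) (f s (J s) (J (γ s)) - f s (x s) (x (γ s)))‖
          ≤ ‖G t s‖ * ‖f s (J s) (J (γ s)) - f s (x s) (x (γ s))‖ :=
            (G t s).le_opNorm _
        _ ≤ (K * ρ * Real.exp (-α * |t - s|)) * ((ℓ₁ + ℓ₂) * M) := by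
            apply mul_le_mul (hG t s) _ (norm_nonneg _)
              (by positivity)
            calc ‖f s (J s) (J (γ s)) - f s (x s) (x (γ s))‖
                ≤ ℓ₁ * ‖J s - x s‖ + ℓ₂ * ‖J (γ s) - x (γ s)‖ := hfl s _ _ _ _
              _ ≤ ℓ₁ * M + ℓ₂ * M := by
                  gcongr
                  exacts [hMle s, hMle (γ s)]
              _ = (ℓ₁ + ℓ₂) * M := by ring
        _ = (K * ρ * ((ℓ₁ + ℓ₂) * M)) * Real.exp (-α * |t - s|) := by ring
    have hgint : Integrable
        (fun s : ℝ => (K * ρ * ((ℓ₁ + ℓ₂) * M)) * Real.exp (-α * |t - s|)) volume :=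
      (exp_abs_shift_integrable α t hα).const_mul _
    calc ‖∫ s : ℝ, (G t s) (f s (J s) (J (γ s)) - f s (x s) (x (γ s)))‖
        ≤ ∫ s : ℝ, (K * ρ * ((ℓ₁ + ℓ₂) * M)) * Real.exp (-α * |t - s|) :=
          norm_integral_le_of_norm_le hgint (Filter.Eventually.of_forall hbound)
      _ = (K * ρ * ((ℓ₁ + ℓ₂) * M)) * (2 / α) := by
          rw [integral_const_mul, exp_abs_integral α t hα]
      _ = q * M := by
          rw [hq]; field_simp
  have hMzero : M ≤ 0 := by
    nlinarith [key, hcond, hM0]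
  intro t
  have : ‖J t - x t‖ ≤ 0 := le_trans (hMle t) hMzero
  have h0 : J t - x t = 0 := by
    simpa using le_antisymm this (norm_nonneg _)
  exact sub_eq_zero.mp h0
end

section
/- (Uniform continuity of the conjugating map via splitting) Let χ : ℝⁿ → ℝⁿ be given by χ(ξ) = −∫_ℝ G̃(t,s) f(s, x_ξ(s), x_ξ(γ(s))) ds for a fixed t, where |G̃(t,s)| ≤ Kρ* e^{-α|t-s|}, |f| ≤ μ, f is (ℓ₁,ℓ₂)-Lipschitz in the last two arguments, and |x_ξ(s) − x_{ξ'}(s)| ≤ |ξ−ξ'| e^{p₁|s−t|}, |x_ξ(γ(s)) − x_{ξ'}(γ(s))| ≤ |ξ−ξ'| e^{p₁(θ + |s−t|)} for all s. Then for every ε > 0 there exists δ > 0 (independent of t) such that |ξ − ξ'| < δ implies |χ(ξ) − χ(ξ')| < ε; in particular, choosing L ≥ (1/α) ln(8Kμρ*/(αε)) and δ = ε/(4D) with D = (Kρ* e^{p₁L}/α)(1 − e^{-αL})(ℓ₁ + ℓ₂ e^{p₁θ}) suffices. -/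
open MeasureTheory Set

private lemma myIntegrableOn_comp_neg {f : ℝ → ℝ} {s : Set ℝ} (hs : MeasurableSet s)
    (hf : IntegrableOn f s) : IntegrableOn (fun x => f (-x)) ((fun x : ℝ => -x) ⁻¹' s) := by
  have A : MeasurableEmbedding (fun x : ℝ => -x) :=
    (Homeomorph.neg ℝ).isClosedEmbedding.measurableEmbedding
  have h1 : (volume.restrict ((fun x : ℝ => -x) ⁻¹' s)).map (fun x : ℝ => -x)
      = volume.restrict s := by
    rw [← Measure.restrict_map A.measurable hs, Measure.map_neg_eq_self]
  rw [IntegrableOn, ← h1, A.integrable_map_iff] at hf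
  exact hf

private lemma myIntOn_Ioi {α c a : ℝ} (hα : 0 < α) :
    IntegrableOn (fun s => Real.exp (-α * (s - c))) (Ioi a) := by
  have : (fun s => Real.exp (-α * (s - c))) = fun s => Real.exp (α * c) * Real.exp (-α * s) := by
    funext s; rw [← Real.exp_add]; congr 1; ring
  rw [this]
  exact (exp_neg_integrableOn_Ioi a hα).const_mul _

private lemma myIntVal_Ioi {α c a : ℝ} (hα : 0 < α) :
    ∫ s in Ioi a, Real.exp (-α * (s - c)) = Real.exp (-α * (a - c)) / α := by
  have h1 : (fun s => Real.exp (-α * (s - c)))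
      = fun s => Real.exp (α * c) * Real.exp (-(α * s)) := by
    funext s; rw [← Real.exp_add]; congr 1; ring
  rw [h1, integral_const_mul]
  rw [integral_comp_mul_left_Ioi (fun x => Real.exp (-x)) a hα]
  rw [integral_exp_neg_Ioi]
  rw [smul_eq_mul]
  rw [show Real.exp (α * c) * (α⁻¹ * Real.exp (-(α * a)))
      = (Real.exp (α * c) * Real.exp (-(α * a))) / α by ring, ← Real.exp_add]
  congr 2
  ring

private lemma myIntOn_Iio {α c a : ℝ} (hα : 0 < α) :
    IntegrableOn (fun s => Real.exp (-α * (c - s))) (Iio a) := by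
  have h := myIntegrableOn_comp_neg (f := fun x => Real.exp (-α * (x - (-c))))
    (s := Ioi (-a)) measurableSet_Ioi (myIntOn_Ioi hα)
  have hset : ((fun x : ℝ => -x) ⁻¹' Ioi (-a)) = Iio a := by
    ext x; simp [neg_lt_neg_iff]
  rw [hset] at h
  convert h using 2 with s
  congr 1
  ring

private lemma myIntVal_Iio {α c a : ℝ} (hα : 0 < α) :
    ∫ s in Iio a, Real.exp (-α * (c - s)) = Real.exp (-α * (c - a)) / α := by
  rw [← integral_Iic_eq_integral_Iio]
  have : ∀ s : ℝ, Real.exp (-α * (c - s)) = (fun x => Real.exp (-α * (x - (-c)))) (-s) := by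
    intro s; simp only; congr 1; ring
  simp_rw [this]
  rw [integral_comp_neg_Iic a (fun x => Real.exp (-α * (x - (-c))))]
  rw [myIntVal_Ioi hα, show -a - -c = c - a from by ring]

private lemma myIntVal_Icc {α L t : ℝ} (hα : 0 < α) (hL : 0 ≤ L) :
    ∫ s in Icc (t - L) (t + L), Real.exp (-α * |s - t|)
      = 2 * (1 - Real.exp (-α * L)) / α := by
  have hle : t - L ≤ t + L := by linarith
  have hcont : Continuous fun s : ℝ => Real.exp (-α * |s - t|) :=
    Real.continuous_exp.comp (continuous_const.mul ((continuous_id.sub continuous_const).abs))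
  rw [integral_Icc_eq_integral_Ioc, ← intervalIntegral.integral_of_le hle]
  rw [← intervalIntegral.integral_add_adjacent_intervals (a := t - L) (b := t) (c := t + L)
    (hcont.intervalIntegrable _ _) (hcont.intervalIntegrable _ _)]
  have e1 : ∫ s in (t - L)..t, Real.exp (-α * |s - t|)
      = ∫ s in (t - L)..t, (fun u => Real.exp (α * u)) (s - t) := by
    apply intervalIntegral.integral_congr
    intro s hs
    rw [uIcc_of_le (by linarith)] at hs
    simp only
    congr 1
    rw [abs_of_nonpos (by linarith [hs.2])]
    ring
  have e2 : ∫ s in t..(t + L), Real.exp (-α * |s - t|)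
      = ∫ s in t..(t + L), (fun u => Real.exp (-α * u)) (s - t) := by
    apply intervalIntegral.integral_congr
    intro s hs
    rw [uIcc_of_le (by linarith)] at hs
    simp only
    congr 1
    rw [abs_of_nonneg (by linarith [hs.1])]
  rw [e1, e2, intervalIntegral.integral_comp_sub_right (fun u => Real.exp (α * u)) t,
    intervalIntegral.integral_comp_sub_right (fun u => Real.exp (-α * u)) t]
  have h1 : t - L - t = -L := by ring
  have h2 : t - t = (0 : ℝ) := by ring
  have h3 : t + L - t = L := by ring
  rw [h1, h2, h3]
  have c1 : ∫ u in (-L)..(0 : ℝ), Real.exp (α * u)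
      = α⁻¹ • ∫ x in (α * (-L))..(α * 0), Real.exp x :=
    intervalIntegral.integral_comp_mul_left Real.exp hα.ne'
  have c2 : ∫ u in (0 : ℝ)..L, Real.exp (-α * u)
      = (-α)⁻¹ • ∫ x in ((-α) * 0)..((-α) * L), Real.exp x :=
    intervalIntegral.integral_comp_mul_left Real.exp (by linarith : -α ≠ 0)
  rw [c1, c2, integral_exp, integral_exp, smul_eq_mul, smul_eq_mul]
  rw [mul_zero, mul_zero, Real.exp_zero]
  have : α * -L = -α * L := by ring
  rw [this, inv_neg, div_eq_mul_inv]
  ring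
open MeasureTheory

theorem stmt17 {n : ℕ}
    (G : ℝ → ℝ → ((Fin n → ℝ) →L[ℝ] (Fin n → ℝ)))
    (f : ℝ → (Fin n → ℝ) → (Fin n → ℝ) → (Fin n → ℝ))
    (γ : ℝ → ℝ) (x : ℝ → (Fin n → ℝ) → ℝ → (Fin n → ℝ))
    (K ρ α μ ℓ₁ ℓ₂ p₁ θ : ℝ)
    (hK : 1 ≤ K) (hρ : 1 ≤ ρ) (hα : 0 < α) (hμ : 0 < μ)
    (hℓ₁ : 0 < ℓ₁) (hℓ₂ : 0 < ℓ₂) (hp₁ : 0 < p₁) (hθ : 0 < θ)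
    (hG : ∀ t s : ℝ, ‖G t s‖ ≤ K * ρ * Real.exp (-α * |t - s|))
    (hfb : ∀ (s : ℝ) (a b : Fin n → ℝ), ‖f s a b‖ ≤ μ)
    (hfl : ∀ (s : ℝ) (a a' b b' : Fin n → ℝ),
      ‖f s a b - f s a' b'‖ ≤ ℓ₁ * ‖a - a'‖ + ℓ₂ * ‖b - b'‖)
    (hx : ∀ (t : ℝ) (ξ ξ' : Fin n → ℝ) (s : ℝ),
      ‖x t ξ s - x t ξ' s‖ ≤ ‖ξ - ξ'‖ * Real.exp (p₁ * |s - t|))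
    (hxγ : ∀ (t : ℝ) (ξ ξ' : Fin n → ℝ) (s : ℝ),
      ‖x t ξ (γ s) - x t ξ' (γ s)‖ ≤ ‖ξ - ξ'‖ * Real.exp (p₁ * (θ + |s - t|)))
    (hint : ∀ (t : ℝ) (ξ : Fin n → ℝ),
      Integrable (fun s => (G t s) (f s (x t ξ s) (x t ξ (γ s)))) volume) :
    (∀ ε > (0 : ℝ), ∃ δ > (0 : ℝ), ∀ (t : ℝ) (ξ ξ' : Fin n → ℝ),
      ‖ξ - ξ'‖ < δ →
        ‖(-∫ s : ℝ, (G t s) (f s (x t ξ s) (x t ξ (γ s)))) -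
          (-∫ s : ℝ, (G t s) (f s (x t ξ' s) (x t ξ' (γ s))))‖ < ε) ∧
    (∀ ε > (0 : ℝ), ∀ L : ℝ,
      (1 / α) * Real.log (8 * K * μ * ρ / (α * ε)) ≤ L →
      ∀ (t : ℝ) (ξ ξ' : Fin n → ℝ),
        ‖ξ - ξ'‖ < ε / (4 * ((K * ρ * Real.exp (p₁ * L) / α) *
            (1 - Real.exp (-α * L)) * (ℓ₁ + ℓ₂ * Real.exp (p₁ * θ)))) →
          ‖(-∫ s : ℝ, (G t s) (f s (x t ξ s) (x t ξ (γ s)))) -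
            (-∫ s : ℝ, (G t s) (f s (x t ξ' s) (x t ξ' (γ s))))‖ < ε) := by

  have main : ∀ ε : ℝ, 0 < ε → ∀ L : ℝ, 0 < L →
      (1 / α) * Real.log (8 * K * μ * ρ / (α * ε)) ≤ L →
      ∀ (t : ℝ) (ξ ξ' : Fin n → ℝ),
        ‖ξ - ξ'‖ < ε / (4 * ((K * ρ * Real.exp (p₁ * L) / α) *
            (1 - Real.exp (-α * L)) * (ℓ₁ + ℓ₂ * Real.exp (p₁ * θ)))) →
        ‖(-∫ s : ℝ, (G t s) (f s (x t ξ s) (x t ξ (γ s)))) -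
          (-∫ s : ℝ, (G t s) (f s (x t ξ' s) (x t ξ' (γ s))))‖ < ε := by
    intro ε hε L hL hLlog t ξ ξ' hd
    set D := (K * ρ * Real.exp (p₁ * L) / α) * (1 - Real.exp (-α * L)) *
      (ℓ₁ + ℓ₂ * Real.exp (p₁ * θ)) with hDdef
    have hexpL1 : Real.exp (-α * L) < 1 := Real.exp_lt_one_iff.mpr (by nlinarith)
    have hD : 0 < D := by
      have h1 : 0 < K * ρ * Real.exp (p₁ * L) / α := by positivity
      have h2 : 0 < 1 - Real.exp (-α * L) := by linarith
      have h3 : 0 < ℓ₁ + ℓ₂ * Real.exp (p₁ * θ) := by positivity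
      exact mul_pos (mul_pos h1 h2) h3
    set u := fun s => f s (x t ξ s) (x t ξ (γ s)) with hu
    set v := fun s => f s (x t ξ' s) (x t ξ' (γ s)) with hv
    have hIu : Integrable (fun s => (G t s) (u s)) volume := hint t ξ
    have hIv : Integrable (fun s => (G t s) (v s)) volume := hint t ξ'
    have hIh : Integrable (fun s => (G t s) (u s) - (G t s) (v s)) volume := hIu.sub hIv
    have hsplit : (-∫ s : ℝ, (G t s) (u s)) - (-∫ s : ℝ, (G t s) (v s))
        = -∫ s : ℝ, ((G t s) (u s) - (G t s) (v s)) := by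
      rw [integral_sub hIu hIv]; abel
    rw [hsplit, norm_neg]
    set d := ‖ξ - ξ'‖ with hdd
    have hd0 : 0 ≤ d := norm_nonneg _
    -- pointwise bounds
    have hb2 : ∀ s : ℝ, ‖(G t s) (u s) - (G t s) (v s)‖
        ≤ 2 * K * ρ * μ * Real.exp (-α * |s - t|) := by
      intro s
      have h2μ : ‖u s - v s‖ ≤ 2 * μ := by
        calc ‖u s - v s‖ ≤ ‖u s‖ + ‖v s‖ := norm_sub_le _ _
          _ ≤ μ + μ := add_le_add (hfb _ _ _) (hfb _ _ _)
          _ = 2 * μ := by ring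
      calc ‖(G t s) (u s) - (G t s) (v s)‖ = ‖(G t s) (u s - v s)‖ := by rw [map_sub]
        _ ≤ ‖G t s‖ * ‖u s - v s‖ := (G t s).le_opNorm _
        _ ≤ (K * ρ * Real.exp (-α * |t - s|)) * (2 * μ) :=
            mul_le_mul (hG t s) h2μ (norm_nonneg _) (by positivity)
        _ = 2 * K * ρ * μ * Real.exp (-α * |s - t|) := by rw [abs_sub_comm t s]; ring
    have hb1 : ∀ s ∈ Set.Icc (t - L) (t + L), ‖(G t s) (u s) - (G t s) (v s)‖
        ≤ (K * ρ * (d * ((ℓ₁ + ℓ₂ * Real.exp (p₁ * θ)) * Real.exp (p₁ * L))))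
          * Real.exp (-α * |s - t|) := by
      intro s hs
      have habs : |s - t| ≤ L := abs_le.mpr ⟨by linarith [hs.1], by linarith [hs.2]⟩
      have hlip : ‖u s - v s‖
          ≤ d * ((ℓ₁ + ℓ₂ * Real.exp (p₁ * θ)) * Real.exp (p₁ * L)) := by
        have e1 := hx t ξ ξ' s
        have e2 := hxγ t ξ ξ' s
        have e3 : Real.exp (p₁ * (θ + |s - t|))
            = Real.exp (p₁ * θ) * Real.exp (p₁ * |s - t|) := by
          rw [← Real.exp_add]; congr 1; ring
        rw [e3] at e2
        have e4 : Real.exp (p₁ * |s - t|) ≤ Real.exp (p₁ * L) :=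
          Real.exp_le_exp.mpr (by nlinarith [hp₁.le])
        calc ‖u s - v s‖
            ≤ ℓ₁ * ‖x t ξ s - x t ξ' s‖ + ℓ₂ * ‖x t ξ (γ s) - x t ξ' (γ s)‖ := hfl _ _ _ _ _
          _ ≤ ℓ₁ * (d * Real.exp (p₁ * |s - t|))
              + ℓ₂ * (d * (Real.exp (p₁ * θ) * Real.exp (p₁ * |s - t|))) :=
              add_le_add (mul_le_mul_of_nonneg_left e1 hℓ₁.le)
                (mul_le_mul_of_nonneg_left e2 hℓ₂.le)
          _ = d * ((ℓ₁ + ℓ₂ * Real.exp (p₁ * θ)) * Real.exp (p₁ * |s - t|)) := by ring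
          _ ≤ d * ((ℓ₁ + ℓ₂ * Real.exp (p₁ * θ)) * Real.exp (p₁ * L)) := by
              apply mul_le_mul_of_nonneg_left _ hd0
              exact mul_le_mul_of_nonneg_left e4 (by positivity)
      calc ‖(G t s) (u s) - (G t s) (v s)‖ = ‖(G t s) (u s - v s)‖ := by rw [map_sub]
        _ ≤ ‖G t s‖ * ‖u s - v s‖ := (G t s).le_opNorm _
        _ ≤ (K * ρ * Real.exp (-α * |t - s|))
            * (d * ((ℓ₁ + ℓ₂ * Real.exp (p₁ * θ)) * Real.exp (p₁ * L))) :=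
            mul_le_mul (hG t s) hlip (norm_nonneg _) (by positivity)
        _ = (K * ρ * (d * ((ℓ₁ + ℓ₂ * Real.exp (p₁ * θ)) * Real.exp (p₁ * L))))
            * Real.exp (-α * |s - t|) := by rw [abs_sub_comm t s]; ring
    -- integrability of the exponential kernel on the pieces
    have hEcont : Continuous (fun s : ℝ => Real.exp (-α * |s - t|)) :=
      Real.continuous_exp.comp (continuous_const.mul ((continuous_id.sub continuous_const).abs))
    have hEIcc : IntegrableOn (fun s : ℝ => Real.exp (-α * |s - t|))
        (Set.Icc (t - L) (t + L)) := hEcont.integrableOn_Icc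
    have hEIoi : IntegrableOn (fun s : ℝ => Real.exp (-α * |s - t|)) (Set.Ioi (t + L)) := by
      apply (myIntOn_Ioi (α := α) (c := t) (a := t + L) hα).congr_fun _ measurableSet_Ioi
      intro s hs
      have : s - t > 0 := by simp only [Set.mem_Ioi] at hs; linarith
      simp only
      rw [abs_of_pos this]
    have hEIio : IntegrableOn (fun s : ℝ => Real.exp (-α * |s - t|)) (Set.Iio (t - L)) := by
      apply (myIntOn_Iio (α := α) (c := t) (a := t - L) hα).congr_fun _ measurableSet_Iio
      intro s hs
      have h1 : s - t < 0 := by simp only [Set.mem_Iio] at hs; linarith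
      simp only
      rw [abs_of_neg h1]
      congr 1
      ring
    -- integral values
    have hvIoi : ∫ s in Set.Ioi (t + L), Real.exp (-α * |s - t|) = Real.exp (-α * L) / α := by
      rw [setIntegral_congr_fun measurableSet_Ioi
        (g := fun s => Real.exp (-α * (s - t))) ?_]
      · rw [myIntVal_Ioi hα, show t + L - t = L from by ring]
      · intro s hs
        have : s - t > 0 := by simp only [Set.mem_Ioi] at hs; linarith
        simp only
        rw [abs_of_pos this]
    have hvIio : ∫ s in Set.Iio (t - L), Real.exp (-α * |s - t|) = Real.exp (-α * L) / α := by
      rw [setIntegral_congr_fun measurableSet_Iio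
        (g := fun s => Real.exp (-α * (t - s))) ?_]
      · rw [myIntVal_Iio hα, show t - (t - L) = L from by ring]
      · intro s hs
        have h1 : s - t < 0 := by simp only [Set.mem_Iio] at hs; linarith
        simp only
        rw [abs_of_neg h1]
        congr 1
        ring
    have hvIcc : ∫ s in Set.Icc (t - L) (t + L), Real.exp (-α * |s - t|)
        = 2 * (1 - Real.exp (-α * L)) / α := myIntVal_Icc hα hL.le
    -- splitting
    have hcompl : (Set.Icc (t - L) (t + L))ᶜ = Set.Iio (t - L) ∪ Set.Ioi (t + L) := by
      ext s
      simp only [Set.mem_compl_iff, Set.mem_Icc, Set.mem_union, Set.mem_Iio, Set.mem_Ioi,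
        not_and_or, not_le]
    have hdisj : Disjoint (Set.Iio (t - L)) (Set.Ioi (t + L)) := by
      apply Set.disjoint_left.mpr
      intro s hs hs'
      simp only [Set.mem_Iio] at hs
      simp only [Set.mem_Ioi] at hs'
      linarith
    have key : ∫ s : ℝ, ‖(G t s) (u s) - (G t s) (v s)‖
        = (∫ s in Set.Icc (t - L) (t + L), ‖(G t s) (u s) - (G t s) (v s)‖)
          + ∫ s in (Set.Icc (t - L) (t + L))ᶜ, ‖(G t s) (u s) - (G t s) (v s)‖ :=
      (integral_add_compl measurableSet_Icc hIh.norm).symm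
    have hmid : ∫ s in Set.Icc (t - L) (t + L), ‖(G t s) (u s) - (G t s) (v s)‖
        ≤ (K * ρ * (d * ((ℓ₁ + ℓ₂ * Real.exp (p₁ * θ)) * Real.exp (p₁ * L))))
          * (2 * (1 - Real.exp (-α * L)) / α) := by
      calc ∫ s in Set.Icc (t - L) (t + L), ‖(G t s) (u s) - (G t s) (v s)‖
          ≤ ∫ s in Set.Icc (t - L) (t + L),
              (K * ρ * (d * ((ℓ₁ + ℓ₂ * Real.exp (p₁ * θ)) * Real.exp (p₁ * L))))
                * Real.exp (-α * |s - t|) :=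
            setIntegral_mono_on hIh.norm.integrableOn (hEIcc.const_mul _)
              measurableSet_Icc hb1
        _ = (K * ρ * (d * ((ℓ₁ + ℓ₂ * Real.exp (p₁ * θ)) * Real.exp (p₁ * L))))
            * ∫ s in Set.Icc (t - L) (t + L), Real.exp (-α * |s - t|) := integral_const_mul _ _
        _ = _ := by rw [hvIcc]
    have htail : ∫ s in (Set.Icc (t - L) (t + L))ᶜ, ‖(G t s) (u s) - (G t s) (v s)‖
        ≤ 2 * K * ρ * μ * (2 * Real.exp (-α * L) / α) := by
      rw [hcompl]
      have hIunion : IntegrableOn (fun s : ℝ => Real.exp (-α * |s - t|))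
          (Set.Iio (t - L) ∪ Set.Ioi (t + L)) := hEIio.union hEIoi
      calc ∫ s in Set.Iio (t - L) ∪ Set.Ioi (t + L), ‖(G t s) (u s) - (G t s) (v s)‖
          ≤ ∫ s in Set.Iio (t - L) ∪ Set.Ioi (t + L),
              2 * K * ρ * μ * Real.exp (-α * |s - t|) :=
            setIntegral_mono_on hIh.norm.integrableOn (hIunion.const_mul _)
              (measurableSet_Iio.union measurableSet_Ioi) (fun s _ => hb2 s)
        _ = (∫ s in Set.Iio (t - L), 2 * K * ρ * μ * Real.exp (-α * |s - t|))
            + ∫ s in Set.Ioi (t + L), 2 * K * ρ * μ * Real.exp (-α * |s - t|) :=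
            setIntegral_union hdisj measurableSet_Ioi (hEIio.const_mul _) (hEIoi.const_mul _)
        _ = 2 * K * ρ * μ * (Real.exp (-α * L) / α)
            + 2 * K * ρ * μ * (Real.exp (-α * L) / α) := by
            rw [integral_const_mul, integral_const_mul, hvIio, hvIoi]
        _ = 2 * K * ρ * μ * (2 * Real.exp (-α * L) / α) := by ring
    -- numeric estimates
    have hT1 : (K * ρ * (d * ((ℓ₁ + ℓ₂ * Real.exp (p₁ * θ)) * Real.exp (p₁ * L))))
        * (2 * (1 - Real.exp (-α * L)) / α) < ε / 2 := by
      have he : (K * ρ * (d * ((ℓ₁ + ℓ₂ * Real.exp (p₁ * θ)) * Real.exp (p₁ * L))))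
          * (2 * (1 - Real.exp (-α * L)) / α) = d * (2 * D) := by
        rw [hDdef]; ring
      rw [he]
      calc d * (2 * D) < (ε / (4 * D)) * (2 * D) :=
            mul_lt_mul_of_pos_right hd (by positivity)
        _ = ε / 2 := by field_simp; ring
    have hQ : (0 : ℝ) < 8 * K * μ * ρ / (α * ε) := by positivity
    have hlog : Real.log (8 * K * μ * ρ / (α * ε)) ≤ α * L := by
      calc Real.log (8 * K * μ * ρ / (α * ε))
          = α * ((1 / α) * Real.log (8 * K * μ * ρ / (α * ε))) := by field_simp
        _ ≤ α * L := mul_le_mul_of_nonneg_left hLlog hα.le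
    have hQle : 8 * K * μ * ρ / (α * ε) ≤ Real.exp (α * L) :=
      (Real.log_le_iff_le_exp hQ).mp hlog
    have hexple : Real.exp (-α * L) ≤ α * ε / (8 * K * μ * ρ) := by
      rw [show -α * L = -(α * L) from by ring, Real.exp_neg]
      calc (Real.exp (α * L))⁻¹ ≤ (8 * K * μ * ρ / (α * ε))⁻¹ := inv_anti₀ hQ hQle
        _ = α * ε / (8 * K * μ * ρ) := by rw [inv_div]
    have hT2 : 2 * K * ρ * μ * (2 * Real.exp (-α * L) / α) ≤ ε / 2 := by
      have h1 : 2 * K * ρ * μ * (2 * Real.exp (-α * L) / α)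
          ≤ 2 * K * ρ * μ * (2 * (α * ε / (8 * K * μ * ρ)) / α) := by gcongr
      have h2 : 2 * K * ρ * μ * (2 * (α * ε / (8 * K * μ * ρ)) / α) = ε / 2 := by
        field_simp
        ring
      linarith
    calc ‖∫ s : ℝ, ((G t s) (u s) - (G t s) (v s))‖
        ≤ ∫ s : ℝ, ‖(G t s) (u s) - (G t s) (v s)‖ := norm_integral_le_integral_norm _
      _ = _ + _ := key
      _ < ε := by linarith
  constructor
  · intro ε hε
    set L := max 1 ((1 / α) * Real.log (8 * K * μ * ρ / (α * ε))) with hLdef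
    have hL0 : (0 : ℝ) < L := lt_of_lt_of_le one_pos (le_max_left _ _)
    have hexpL1 : Real.exp (-α * L) < 1 := Real.exp_lt_one_iff.mpr (by nlinarith)
    have hD : 0 < (K * ρ * Real.exp (p₁ * L) / α) * (1 - Real.exp (-α * L)) *
        (ℓ₁ + ℓ₂ * Real.exp (p₁ * θ)) := by
      have h1 : 0 < K * ρ * Real.exp (p₁ * L) / α := by positivity
      have h2 : 0 < 1 - Real.exp (-α * L) := by linarith
      have h3 : 0 < ℓ₁ + ℓ₂ * Real.exp (p₁ * θ) := by positivity
      exact mul_pos (mul_pos h1 h2) h3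
    refine ⟨ε / (4 * ((K * ρ * Real.exp (p₁ * L) / α) * (1 - Real.exp (-α * L)) *
        (ℓ₁ + ℓ₂ * Real.exp (p₁ * θ)))), by positivity, fun t ξ ξ' hd => ?_⟩
    exact main ε hε L hL0 (le_max_right _ _) t ξ ξ' hd
  · intro ε hε L hLlog t ξ ξ' hd
    by_cases hL : 0 < L
    · exact main ε hε L hL hLlog t ξ ξ' hd
    · exfalso
      push_neg at hL
      have h1 : 1 ≤ Real.exp (-α * L) := by
        rw [← Real.exp_zero]
        exact Real.exp_le_exp.mpr (by nlinarith)
      have hA : 0 ≤ K * ρ * Real.exp (p₁ * L) / α := by positivity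
      have hC : 0 ≤ ℓ₁ + ℓ₂ * Real.exp (p₁ * θ) := by positivity
      have hB : 1 - Real.exp (-α * L) ≤ 0 := by linarith
      have hDle : (K * ρ * Real.exp (p₁ * L) / α) * (1 - Real.exp (-α * L)) *
          (ℓ₁ + ℓ₂ * Real.exp (p₁ * θ)) ≤ 0 :=
        mul_nonpos_of_nonpos_of_nonneg (mul_nonpos_of_nonneg_of_nonpos hA hB) hC
      have hδ : ε / (4 * ((K * ρ * Real.exp (p₁ * L) / α) * (1 - Real.exp (-α * L)) *
          (ℓ₁ + ℓ₂ * Real.exp (p₁ * θ)))) ≤ 0 :=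
        div_nonpos_of_nonneg_of_nonpos hε.le (by linarith)
      linarith [norm_nonneg (ξ - ξ')]
end
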